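/- arXiv:2210.09362 — 3 statements merged into one kernel-verified Lean document; each statement's English description precedes it below -/
import Mathlib

section
/- Suppose Y is conditionally independent of R given the sigma-algebra generated by (X, Z), and let pi be a version of the conditional probability P(R = 1 | sigma(X,Z)) satisfying pi(X̃) >= epsilon almost surely for some epsilon > 0. Then for every beta in R^p and every bounded measurable Q: R^{p+1} -> R, the AIPW score is unbiased for the full-data score: E[S(beta; pi, Q)] = E[(b'(<X, beta>) - Y) X]. In particular, if beta satisfies E[(b'(<X, beta>) - Y) X] = 0, then E[S(beta; pi, Q)] = 0 for any working imputation model Q. -/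
open MeasureTheory ProbabilityTheory Matrix

open MeasureTheory ProbabilityTheory Filter

lemma condexp_mul_of_condIndepFun {Ω : Type*} [mΩ : MeasurableSpace Ω] [StandardBorelSpace Ω]
    {P : Measure Ω} [IsProbabilityMeasure P] {m : MeasurableSpace Ω} {hm : m ≤ mΩ}
    {Y R : Ω → ℝ} (hY : Measurable[mΩ] Y) (hR : Measurable[mΩ] R)
    (hR01 : ∀ ω, R ω = 0 ∨ R ω = 1) (hYint : Integrable Y P)
    (hYR : CondIndepFun m hm Y R P) :
    P[fun ω => R ω * Y ω | m] =ᵐ[P] fun ω => (P[R | m]) ω * (P[Y | m]) ω := by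
  have hRbd : ∀ ω, |R ω| ≤ 1 := fun ω => by rcases hR01 ω with h | h <;> simp [h]
  have hRint : Integrable R P :=
    (integrable_const (1 : ℝ)).mono' (hR.aestronglyMeasurable (μ := P))
      (Eventually.of_forall fun ω => by simpa [Real.norm_eq_abs] using hRbd ω)
  -- Step 1 : indicators
  have hstep1 : ∀ (B : Set ℝ), MeasurableSet B →
      P[fun ω => R ω * Set.indicator (Y ⁻¹' B) (fun _ => (1 : ℝ)) ω | m] =ᵐ[P]
        fun ω => (P[R | m]) ω * (P[Set.indicator (Y ⁻¹' B) fun _ => (1 : ℝ) | m]) ω := by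
    intro B hB
    have h := (condIndepFun_iff_condExp_inter_preimage_eq_mul hY hR).mp hYR B {1} hB
      (measurableSet_singleton 1)
    have h1 : (fun ω => R ω * Set.indicator (Y ⁻¹' B) (fun _ => (1 : ℝ)) ω)
        = Set.indicator (Y ⁻¹' B ∩ R ⁻¹' {1}) fun _ => (1 : ℝ) := by
      funext ω
      rcases hR01 ω with h0 | h0 <;>
        by_cases hYB : ω ∈ Y ⁻¹' B <;>
          simp [Set.indicator_apply, Set.mem_inter_iff, Set.mem_preimage, h0, hYB]
    have h2 : R = Set.indicator (R ⁻¹' {1}) fun _ => (1 : ℝ) := by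
      funext ω
      rcases hR01 ω with h0 | h0 <;> simp [Set.indicator_apply, Set.mem_preimage, h0]
    calc P[fun ω => R ω * Set.indicator (Y ⁻¹' B) (fun _ => (1 : ℝ)) ω | m]
        = P[Set.indicator (Y ⁻¹' B ∩ R ⁻¹' {1}) fun _ => (1 : ℝ) | m] := by rw [h1]
      _ =ᵐ[P] fun ω => (P[Set.indicator (Y ⁻¹' B) fun _ => (1 : ℝ) | m]) ω
            * (P[Set.indicator (R ⁻¹' {1}) fun _ => (1 : ℝ) | m]) ω := h
      _ = fun ω => (P[R | m]) ω * (P[Set.indicator (Y ⁻¹' B) fun _ => (1 : ℝ) | m]) ω := by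
            funext ω
            rw [← h2, mul_comm]
  -- boundedness of simple functions
  have hbdd : ∀ φ : SimpleFunc ℝ ℝ, ∃ C, ∀ x, |φ x| ≤ C := by
    intro φ
    refine ⟨φ.range.sup' ⟨φ 0, φ.mem_range_self 0⟩ (fun y => |y|), fun x => ?_⟩
    exact Finset.le_sup' (f := fun y => |y|) (φ.mem_range_self x)
  have hφint : ∀ φ : SimpleFunc ℝ ℝ, Integrable (fun ω => φ (Y ω)) P := by
    intro φ
    obtain ⟨C, hC⟩ := hbdd φ
    exact (integrable_const C).mono' ((φ.measurable.comp hY).aestronglyMeasurable (μ := P))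
      (Eventually.of_forall fun ω => by simpa [Real.norm_eq_abs] using hC (Y ω))
  have hRφint : ∀ φ : SimpleFunc ℝ ℝ, Integrable (fun ω => R ω * φ (Y ω)) P := fun φ =>
    (hφint φ).bdd_mul (hR.aestronglyMeasurable (μ := P))
      (Eventually.of_forall fun ω => by simpa [Real.norm_eq_abs] using hRbd ω)
  -- Step 2 : simple functions
  have hstep2 : ∀ φ : SimpleFunc ℝ ℝ,
      P[fun ω => R ω * φ (Y ω) | m] =ᵐ[P]
        fun ω => (P[R | m]) ω * (P[fun ω => φ (Y ω) | m]) ω := by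
    intro φ
    induction φ using SimpleFunc.induction with
    | @const c s hs =>
      set I : Ω → ℝ := fun ω => Set.indicator (Y ⁻¹' s) (fun _ => (1 : ℝ)) ω with hI
      have e0 : ∀ ω, (SimpleFunc.piecewise s hs (SimpleFunc.const ℝ c)
          (SimpleFunc.const ℝ 0) : SimpleFunc ℝ ℝ) (Y ω) = c * I ω := by
        intro ω
        by_cases hmem : Y ω ∈ s <;>
          simp [SimpleFunc.coe_piecewise, SimpleFunc.coe_const, Set.piecewise, hmem, hI,
            Set.indicator_apply, Set.mem_preimage]
      have e1 : (fun ω => R ω * (SimpleFunc.piecewise s hs (SimpleFunc.const ℝ c)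
          (SimpleFunc.const ℝ 0) : SimpleFunc ℝ ℝ) (Y ω)) = c • fun ω => R ω * I ω := by
        funext ω
        simp only [Pi.smul_apply, smul_eq_mul]
        rw [e0 ω]; ring
      have e2 : (fun ω => (SimpleFunc.piecewise s hs (SimpleFunc.const ℝ c)
          (SimpleFunc.const ℝ 0) : SimpleFunc ℝ ℝ) (Y ω))
          = c • fun ω => Set.indicator (Y ⁻¹' s) (fun _ => (1 : ℝ)) ω := by
        funext ω
        simp only [Pi.smul_apply, smul_eq_mul]
        rw [e0 ω, hI]
      have e2' : (fun ω => Set.indicator (Y ⁻¹' s) (fun _ => (1 : ℝ)) ω)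
          = Set.indicator (Y ⁻¹' s) fun _ => (1 : ℝ) := rfl
      have h5 : P[fun ω => (SimpleFunc.piecewise s hs (SimpleFunc.const ℝ c)
          (SimpleFunc.const ℝ 0) : SimpleFunc ℝ ℝ) (Y ω) | m]
          =ᵐ[P] c • P[Set.indicator (Y ⁻¹' s) fun _ => (1 : ℝ) | m] := by
        rw [e2, e2']
        exact condExp_smul c _ m
      calc P[fun ω => R ω * (SimpleFunc.piecewise s hs (SimpleFunc.const ℝ c)
              (SimpleFunc.const ℝ 0) : SimpleFunc ℝ ℝ) (Y ω) | m]
          = P[c • fun ω => R ω * I ω | m] := by rw [e1]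
        _ =ᵐ[P] c • P[fun ω => R ω * I ω | m] := condExp_smul c _ m
        _ =ᵐ[P] c • fun ω => (P[R | m]) ω
            * (P[Set.indicator (Y ⁻¹' s) fun _ => (1 : ℝ) | m]) ω := (hstep1 s hs).const_smul c
        _ = fun ω => (P[R | m]) ω
            * (c • P[Set.indicator (Y ⁻¹' s) fun _ => (1 : ℝ) | m]) ω := by
              funext ω; simp [Pi.smul_apply, smul_eq_mul]; ring
        _ =ᵐ[P] fun ω => (P[R | m]) ω * (P[fun ω => (SimpleFunc.piecewise s hs
            (SimpleFunc.const ℝ c) (SimpleFunc.const ℝ 0) : SimpleFunc ℝ ℝ) (Y ω) | m]) ω := by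
              filter_upwards [h5] with ω hω
              rw [hω]
    | @add φ ψ hdisj h1 h2 =>
      have e1 : (fun ω => R ω * (φ + ψ : SimpleFunc ℝ ℝ) (Y ω))
          = (fun ω => R ω * φ (Y ω)) + fun ω => R ω * ψ (Y ω) := by
        funext ω; simp [mul_add]
      have e2 : (fun ω => (φ + ψ : SimpleFunc ℝ ℝ) (Y ω))
          = (fun ω => φ (Y ω)) + fun ω => ψ (Y ω) := by
        funext ω; simp
      have h6 : P[fun ω => (φ + ψ : SimpleFunc ℝ ℝ) (Y ω) | m]
          =ᵐ[P] P[fun ω => φ (Y ω) | m] + P[fun ω => ψ (Y ω) | m] := by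
        rw [e2]; exact condExp_add (hφint φ) (hφint ψ) m
      calc P[fun ω => R ω * (φ + ψ : SimpleFunc ℝ ℝ) (Y ω) | m]
          = P[(fun ω => R ω * φ (Y ω)) + fun ω => R ω * ψ (Y ω) | m] := by rw [e1]
        _ =ᵐ[P] P[fun ω => R ω * φ (Y ω) | m] + P[fun ω => R ω * ψ (Y ω) | m] :=
            condExp_add (hRφint φ) (hRφint ψ) m
        _ =ᵐ[P] fun ω => (P[R | m]) ω * ((P[fun ω => φ (Y ω) | m]) ω
            + (P[fun ω => ψ (Y ω) | m]) ω) := by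
              filter_upwards [h1, h2] with ω hω1 hω2
              simp only [Pi.add_apply, hω1, hω2]
              ring
        _ =ᵐ[P] fun ω => (P[R | m]) ω * (P[fun ω => (φ + ψ : SimpleFunc ℝ ℝ) (Y ω) | m]) ω := by
              filter_upwards [h6] with ω hω
              rw [hω, Pi.add_apply]
  -- Step 3 : limit
  set κ := P[R | m] with hκdef
  have hκ_aesm : AEStronglyMeasurable[mΩ] κ P := integrable_condExp.aestronglyMeasurable (μ := P)
  have hκ_bd : ∀ᵐ ω ∂P, |κ ω| ≤ 1 := by
    have h1 : κ ≤ᵐ[P] fun _ => (1 : ℝ) := by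
      have := condExp_mono (μ := P) (m := m) hRint (integrable_const (1 : ℝ))
        (Eventually.of_forall fun ω => by
          rcases hR01 ω with h | h <;> simp [h])
      rwa [condExp_const hm (1 : ℝ)] at this
    have h2 : (0 : Ω → ℝ) ≤ᵐ[P] κ :=
      condExp_nonneg (Eventually.of_forall fun ω => by
        rcases hR01 ω with h | h <;> simp [h])
    filter_upwards [h1, h2] with ω hω1 hω2
    simp only [Pi.zero_apply] at hω2
    rw [abs_le]
    exact ⟨by linarith, hω1⟩
  have hRY_int : Integrable (fun ω => R ω * Y ω) P :=
    hYint.bdd_mul (hR.aestronglyMeasurable (μ := P))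
      (Eventually.of_forall fun ω => by simpa [Real.norm_eq_abs] using hRbd ω)
  set φ : ℕ → SimpleFunc ℝ ℝ :=
    fun n => SimpleFunc.approxOn id measurable_id Set.univ 0 (Set.mem_univ 0) n with hφdef
  have hφ_tendsto : ∀ x : ℝ, Tendsto (fun n => φ n x) atTop (nhds x) := fun x =>
    SimpleFunc.tendsto_approxOn measurable_id (Set.mem_univ 0) (by simp)
  have hφ_le : ∀ n (x : ℝ), |φ n x| ≤ |x| + |x| := fun n x => by
    simpa [Real.norm_eq_abs] using
      SimpleFunc.norm_approxOn_zero_le measurable_id (Set.mem_univ 0) x n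
  have hD : Tendsto (fun n => ∫ ω, |φ n (Y ω) - Y ω| ∂P) atTop (nhds 0) := by
    have := tendsto_integral_of_dominated_convergence (μ := P)
      (F := fun n ω => |φ n (Y ω) - Y ω|) (f := fun _ => (0 : ℝ))
      (bound := fun ω => 3 * |Y ω|)
      (fun n => by
        have hm1 : Measurable[mΩ] fun ω => (φ n) (Y ω) := (φ n).measurable.comp hY
        have hm2 : Measurable[mΩ] fun ω => (φ n) (Y ω) - Y ω := hm1.sub hY
        have hm3 : Measurable[mΩ] fun ω => |(φ n) (Y ω) - Y ω| :=
          Measurable.comp (continuous_abs.measurable) hm2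
        exact hm3.aestronglyMeasurable)
      (hYint.abs.const_mul 3)
      (fun n => Eventually.of_forall fun ω => by
        have h1 : |φ n (Y ω) - Y ω| ≤ |φ n (Y ω)| + |Y ω| := abs_sub _ _
        have h2 := hφ_le n (Y ω)
        simp only [Real.norm_eq_abs, abs_abs]
        linarith)
      (Eventually.of_forall fun ω => by
        have h := ((hφ_tendsto (Y ω)).sub (tendsto_const_nhds (x := Y ω))).abs
        simp only [sub_self, abs_zero] at h
        simpa using h)
    simpa using this
  have key : ∀ n, ∫ ω, |(P[fun ω => R ω * Y ω | m]) ω - κ ω * (P[Y | m]) ω| ∂P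
      ≤ 2 * ∫ ω, |φ n (Y ω) - Y ω| ∂P := by
    intro n
    have hψ_int : Integrable (fun ω => φ n (Y ω)) P := hφint (φ n)
    have hRψ_int : Integrable (fun ω => R ω * φ n (Y ω)) P := hRφint (φ n)
    have hκH_int : Integrable (fun ω => κ ω * (P[Y | m]) ω) P :=
      integrable_condExp.bdd_mul hκ_aesm
        (hκ_bd.mono fun ω hω => by simpa [Real.norm_eq_abs] using hω)
    have hsub1 : P[(fun ω => R ω * Y ω) - fun ω => R ω * φ n (Y ω) | m]
        =ᵐ[P] P[fun ω => R ω * Y ω | m] - P[fun ω => R ω * φ n (Y ω) | m] :=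
      condExp_sub hRY_int hRψ_int m
    have hsub2 : P[(fun ω => φ n (Y ω)) - Y | m]
        =ᵐ[P] P[fun ω => φ n (Y ω) | m] - P[Y | m] :=
      condExp_sub hψ_int hYint m
    have hptwise : ∀ᵐ ω ∂P, |(P[fun ω => R ω * Y ω | m]) ω - κ ω * (P[Y | m]) ω|
        ≤ |(P[(fun ω => R ω * Y ω) - fun ω => R ω * φ n (Y ω) | m]) ω|
          + |(P[(fun ω => φ n (Y ω)) - Y | m]) ω| := by
      filter_upwards [hsub1, hsub2, hstep2 (φ n), hκ_bd] with ω h1 h2 h3 h4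
      rw [h1, h2]
      simp only [Pi.sub_apply]
      have habs : |κ ω * ((P[fun ω => φ n (Y ω) | m]) ω - (P[Y | m]) ω)|
          ≤ |(P[fun ω => φ n (Y ω) | m]) ω - (P[Y | m]) ω| := by
        rw [abs_mul]
        calc |κ ω| * |(P[fun ω => φ n (Y ω) | m]) ω - (P[Y | m]) ω|
            ≤ 1 * |(P[fun ω => φ n (Y ω) | m]) ω - (P[Y | m]) ω| :=
              mul_le_mul_of_nonneg_right h4 (abs_nonneg _)
          _ = _ := one_mul _
      have e : (P[fun ω => R ω * Y ω | m]) ω - κ ω * (P[Y | m]) ω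
          = ((P[fun ω => R ω * Y ω | m]) ω - κ ω * (P[fun ω => φ n (Y ω) | m]) ω)
            + κ ω * ((P[fun ω => φ n (Y ω) | m]) ω - (P[Y | m]) ω) := by ring
      rw [e, ← h3]
      exact (abs_add_le _ _).trans (add_le_add le_rfl habs)
    have hint_lhs : Integrable (fun ω => |(P[fun ω => R ω * Y ω | m]) ω
        - κ ω * (P[Y | m]) ω|) P := (integrable_condExp.sub hκH_int).abs
    have hint_rhs : Integrable (fun ω =>
        |(P[(fun ω => R ω * Y ω) - fun ω => R ω * φ n (Y ω) | m]) ω|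
          + |(P[(fun ω => φ n (Y ω)) - Y | m]) ω|) P :=
      integrable_condExp.abs.add integrable_condExp.abs
    calc ∫ ω, |(P[fun ω => R ω * Y ω | m]) ω - κ ω * (P[Y | m]) ω| ∂P
        ≤ ∫ ω, (|(P[(fun ω => R ω * Y ω) - fun ω => R ω * φ n (Y ω) | m]) ω|
            + |(P[(fun ω => φ n (Y ω)) - Y | m]) ω|) ∂P :=
          integral_mono_ae hint_lhs hint_rhs hptwise
      _ = ∫ ω, |(P[(fun ω => R ω * Y ω) - fun ω => R ω * φ n (Y ω) | m]) ω| ∂P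
            + ∫ ω, |(P[(fun ω => φ n (Y ω)) - Y | m]) ω| ∂P :=
          integral_add integrable_condExp.abs integrable_condExp.abs
      _ ≤ ∫ ω, |((fun ω => R ω * Y ω) - fun ω => R ω * φ n (Y ω)) ω| ∂P
            + ∫ ω, |((fun ω => φ n (Y ω)) - Y) ω| ∂P :=
          add_le_add (integral_abs_condExp_le _) (integral_abs_condExp_le _)
      _ ≤ ∫ ω, |φ n (Y ω) - Y ω| ∂P + ∫ ω, |φ n (Y ω) - Y ω| ∂P := by
          refine add_le_add ?_ ?_
          · refine integral_mono_ae ((hRY_int.sub hRψ_int).abs) ((hψ_int.sub hYint).abs) ?_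
            refine Eventually.of_forall fun ω => ?_
            simp only [Pi.sub_apply]
            calc |R ω * Y ω - R ω * φ n (Y ω)| = |R ω| * |Y ω - φ n (Y ω)| := by
                  rw [← abs_mul]; ring_nf
              _ ≤ 1 * |Y ω - φ n (Y ω)| := mul_le_mul_of_nonneg_right (hRbd ω) (abs_nonneg _)
              _ = |φ n (Y ω) - Y ω| := by rw [one_mul, abs_sub_comm]
          · refine le_of_eq ?_
            congr 1
      _ = 2 * ∫ ω, |φ n (Y ω) - Y ω| ∂P := by ring
  have h0 : ∫ ω, |(P[fun ω => R ω * Y ω | m]) ω - κ ω * (P[Y | m]) ω| ∂P = 0 := by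
    have hnn : 0 ≤ ∫ ω, |(P[fun ω => R ω * Y ω | m]) ω - κ ω * (P[Y | m]) ω| ∂P :=
      integral_nonneg fun ω => abs_nonneg _
    have hle : ∫ ω, |(P[fun ω => R ω * Y ω | m]) ω - κ ω * (P[Y | m]) ω| ∂P ≤ 0 := by
      have h2D : Tendsto (fun n => 2 * ∫ ω, |φ n (Y ω) - Y ω| ∂P) atTop (nhds 0) := by
        simpa using hD.const_mul 2
      exact ge_of_tendsto' h2D key
    linarith
  have hκH_int : Integrable (fun ω => κ ω * (P[Y | m]) ω) P :=
    integrable_condExp.bdd_mul hκ_aesm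
      (hκ_bd.mono fun ω hω => by simpa [Real.norm_eq_abs] using hω)
  have habs : (fun ω => |(P[fun ω => R ω * Y ω | m]) ω - κ ω * (P[Y | m]) ω|) =ᵐ[P] 0 :=
    (integral_eq_zero_iff_of_nonneg (fun ω => abs_nonneg _)
      (integrable_condExp.sub hκH_int).abs).mp h0
  filter_upwards [habs] with ω hω
  have h1 : |(P[fun ω => R ω * Y ω | m]) ω - κ ω * (P[Y | m]) ω| = 0 := hω
  have h2 := abs_eq_zero.mp h1
  linarith [h2]


/-- `X̃ = (Z, X) ∈ ℝ^{p+1}`, the surrogate stacked on top of the covariates. -/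
noncomputable def tilde {Ω : Type*} {p : ℕ} (Z : Ω → ℝ) (X : Ω → Fin p → ℝ) (ω : Ω) :
    Fin (p + 1) → ℝ := Fin.cons (Z ω) (X ω)

lemma measurable_tilde {Ω : Type*} [MeasurableSpace Ω] {p : ℕ} {Z : Ω → ℝ} {X : Ω → Fin p → ℝ}
    (hZ : Measurable Z) (hX : Measurable X) : Measurable (tilde Z X) := by
  unfold tilde
  refine measurable_pi_iff.2 fun i => ?_
  refine Fin.cases ?_ (fun j => ?_) i
  · simpa using hZ
  · simpa using measurable_pi_iff.1 hX j

/-- The AIPW score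
`S(β; π, Q) = [π(X̃)⁻¹ R (b'(⟨X,β⟩) - Y) - π(X̃)⁻¹ (R - π(X̃)) (b'(⟨X,β⟩) - Q(X̃))] X`,
an `ℝ^p`-valued random vector. -/
noncomputable def aipwScore {Ω : Type*} {p : ℕ} (X : Ω → Fin p → ℝ) (Z Y R : Ω → ℝ)
    (b : ℝ → ℝ) (β : Fin p → ℝ) (π Q : (Fin (p + 1) → ℝ) → ℝ) (ω : Ω) : Fin p → ℝ :=
  fun i =>
    ((π (tilde Z X ω))⁻¹ * R ω * (deriv b (X ω ⬝ᵥ β) - Y ω)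
        - (π (tilde Z X ω))⁻¹ * (R ω - π (tilde Z X ω))
          * (deriv b (X ω ⬝ᵥ β) - Q (tilde Z X ω))) * X ω i

/-- If `Y ⟂ R ∣ σ(X, Z)` and `π` is a version of the conditional probability
`P(R = 1 ∣ σ(X, Z))` bounded below by some `ε > 0` a.s., then for every `β ∈ ℝ^p` and every
bounded measurable working imputation model `Q`, the AIPW score is unbiased for the full-data
score: `E[S(β; π, Q)] = E[(b'(⟨X, β⟩) - Y) X]`.  In particular, if
`E[(b'(⟨X, β⟩) - Y) X] = 0`, then `E[S(β; π, Q)] = 0` for any such `Q`. -/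
theorem aipw_unbiased_with_true_propensity
    {Ω : Type*} [MeasurableSpace Ω] [StandardBorelSpace Ω] {P : Measure Ω}
    [IsProbabilityMeasure P] {p : ℕ}
    (X : Ω → Fin p → ℝ) (Z Y R : Ω → ℝ)
    (hX : Measurable X) (hZ : Measurable Z) (hY : Measurable Y) (hR : Measurable R)
    (hXbd : ∃ C, ∀ ω i, |X ω i| ≤ C) (hZbd : ∃ C, ∀ ω, |Z ω| ≤ C)
    (hYint : Integrable Y P)
    (hR01 : ∀ ω, R ω = 0 ∨ R ω = 1)
    (b : ℝ → ℝ) (hb : Differentiable ℝ b) (hb' : Measurable (deriv b))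
    -- `Y` is conditionally independent of `R` given `σ(X, Z)`
    (hYR : CondIndepFun (MeasurableSpace.comap (tilde Z X) inferInstance)
      (measurable_tilde hZ hX).comap_le Y R P)
    (π : (Fin (p + 1) → ℝ) → ℝ) (hπmeas : Measurable π)
    (hπrange : ∀ x, 0 < π x ∧ π x ≤ 1)
    -- `π` is a version of `P(R = 1 ∣ σ(X, Z)) = E[R ∣ σ(X, Z)]`
    (hπver : (fun ω => π (tilde Z X ω)) =ᵐ[P]
      P[R | MeasurableSpace.comap (tilde Z X) inferInstance])
    (hπeps : ∃ ε > (0 : ℝ), ∀ᵐ ω ∂P, ε ≤ π (tilde Z X ω)) :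
    (∀ (β : Fin p → ℝ) (Q : (Fin (p + 1) → ℝ) → ℝ), Measurable Q → (∃ C, ∀ x, |Q x| ≤ C) →
        ∀ i, ∫ ω, aipwScore X Z Y R b β π Q ω i ∂P
          = ∫ ω, (deriv b (X ω ⬝ᵥ β) - Y ω) * X ω i ∂P) ∧
      (∀ (β : Fin p → ℝ) (Q : (Fin (p + 1) → ℝ) → ℝ), Measurable Q → (∃ C, ∀ x, |Q x| ≤ C) →
        (∀ i, ∫ ω, (deriv b (X ω ⬝ᵥ β) - Y ω) * X ω i ∂P = 0) →
        ∀ i, ∫ ω, aipwScore X Z Y R b β π Q ω i ∂P = 0) := by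
  have main : ∀ (β : Fin p → ℝ) (Q : (Fin (p + 1) → ℝ) → ℝ), Measurable Q →
      (∃ C, ∀ x, |Q x| ≤ C) →
      ∀ i, ∫ ω, aipwScore X Z Y R b β π Q ω i ∂P
        = ∫ ω, (deriv b (X ω ⬝ᵥ β) - Y ω) * X ω i ∂P := by
    intro β Q hQmeas hQbd i
    obtain ⟨Cx, hCx⟩ := hXbd
    obtain ⟨CQ, hCQ⟩ := hQbd
    obtain ⟨ε, hε, hπa⟩ := hπeps
    set mΩ : MeasurableSpace Ω := inferInstance with hmΩ_def
    set t : Ω → Fin (p + 1) → ℝ := tilde Z X with ht_def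
    have ht : Measurable t := measurable_tilde hZ hX
    set m : MeasurableSpace Ω := MeasurableSpace.comap t inferInstance with hm_def
    have hm : m ≤ mΩ := ht.comap_le
    have htm : Measurable[m] t := measurable_iff_comap_le.mpr le_rfl
    -- `X ω i` is `m`-measurable
    have hXi_eq : (fun ω => X ω i) = fun ω => t ω i.succ := by
      funext ω
      simp [ht_def, tilde, Fin.cons_succ]
    have hXi_m : Measurable[m] fun ω => X ω i := by
      rw [hXi_eq]
      exact Measurable.eval htm
    -- basic functions
    set κt : Ω → ℝ := fun ω => π (t ω) with hκt_def
    set v : Ω → ℝ := fun ω => (π (t ω))⁻¹ * X ω i with hv_def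
    set g1 : Ω → ℝ := fun ω => v ω * Q (t ω) with hg1_def
    have hκt_meas : Measurable[mΩ] κt := hπmeas.comp ht
    have hv_meas : Measurable[mΩ] v :=
      Measurable.mul (Measurable.inv (hπmeas.comp ht)) ((measurable_pi_apply i).comp hX)
    have hg1_meas : Measurable[mΩ] g1 := Measurable.mul hv_meas (hQmeas.comp ht)
    have hκt_m : Measurable[m] κt := Measurable.comp hπmeas htm
    have hv_m : Measurable[m] v :=
      Measurable.mul (Measurable.inv (Measurable.comp hπmeas htm)) hXi_m
    have hg1_m : Measurable[m] g1 := Measurable.mul hv_m (Measurable.comp hQmeas htm)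
    have hvκ_m : Measurable[m] fun ω => v ω * κt ω := Measurable.mul hv_m hκt_m
    -- bounds
    have hκt_bd : ∀ ω, |κt ω| ≤ 1 := fun ω =>
      abs_le.mpr ⟨by linarith [(hπrange (t ω)).1], (hπrange (t ω)).2⟩
    have hR_bd : ∀ ω, |R ω| ≤ 1 := fun ω => by rcases hR01 ω with h | h <;> simp [h]
    set Cv : ℝ := ε⁻¹ * |Cx| with hCv_def
    have hCv0 : 0 ≤ Cv := mul_nonneg (inv_nonneg.mpr hε.le) (abs_nonneg _)
    have hXi_bd : ∀ ω, |X ω i| ≤ |Cx| := fun ω => (hCx ω i).trans (le_abs_self _)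
    have hQt_bd : ∀ ω, |Q (t ω)| ≤ |CQ| := fun ω => (hCQ (t ω)).trans (le_abs_self _)
    have hv_bd : ∀ᵐ ω ∂P, |v ω| ≤ Cv := by
      filter_upwards [hπa] with ω hω
      have h1 : (0 : ℝ) < π (t ω) := (hπrange (t ω)).1
      rw [hv_def]
      calc |(π (t ω))⁻¹ * X ω i| = |(π (t ω))⁻¹| * |X ω i| := abs_mul _ _
        _ ≤ ε⁻¹ * |Cx| := by
            refine mul_le_mul ?_ (hXi_bd ω) (abs_nonneg _) (inv_nonneg.mpr hε.le)
            rw [abs_inv, abs_of_pos h1]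
            exact inv_anti₀ hε hω
    have hvκ_bd : ∀ᵐ ω ∂P, |v ω * κt ω| ≤ Cv := by
      filter_upwards [hv_bd] with ω hω
      calc |v ω * κt ω| = |v ω| * |κt ω| := abs_mul _ _
        _ ≤ Cv * 1 := mul_le_mul hω (hκt_bd ω) (abs_nonneg _) hCv0
        _ = Cv := mul_one _
    have hg1_bd : ∀ᵐ ω ∂P, |g1 ω| ≤ Cv * |CQ| := by
      filter_upwards [hv_bd] with ω hω
      calc |g1 ω| = |v ω| * |Q (t ω)| := abs_mul _ _
        _ ≤ Cv * |CQ| := mul_le_mul hω (hQt_bd ω) (abs_nonneg _) hCv0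
    -- integrability helpers
    have hb_int : ∀ (h : Ω → ℝ) (C : ℝ), Measurable[mΩ] h → (∀ᵐ ω ∂P, |h ω| ≤ C) →
        Integrable h P := fun h C hmeas hbd =>
      (integrable_const C).mono' (hmeas.aestronglyMeasurable (μ := P))
        (hbd.mono fun ω hω => by simpa [Real.norm_eq_abs] using hω)
    have hbY_int : ∀ (h : Ω → ℝ) (C : ℝ), Measurable[mΩ] h → (∀ᵐ ω ∂P, |h ω| ≤ C) →
        Integrable (fun ω => h ω * Y ω) P := fun h C hmeas hbd =>
      hYint.bdd_mul (hmeas.aestronglyMeasurable (μ := P))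
        (hbd.mono fun ω hω => by simpa [Real.norm_eq_abs] using hω)
    have hRint : Integrable R P := hb_int R 1 hR (Eventually.of_forall hR_bd)
    have hRY_int : Integrable (fun ω => R ω * Y ω) P :=
      hbY_int R 1 hR (Eventually.of_forall hR_bd)
    have i1 : Integrable (fun ω => g1 ω * R ω) P := by
      refine hb_int _ (Cv * |CQ|) (Measurable.mul hg1_meas hR) ?_
      filter_upwards [hg1_bd] with ω hω
      calc |g1 ω * R ω| = |g1 ω| * |R ω| := abs_mul _ _
        _ ≤ (Cv * |CQ|) * 1 :=
            mul_le_mul hω (hR_bd ω) (abs_nonneg _) (mul_nonneg hCv0 (abs_nonneg _))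
        _ = Cv * |CQ| := mul_one _
    have i2 : Integrable (fun ω => g1 ω * κt ω) P := by
      refine hb_int _ (Cv * |CQ|) (Measurable.mul hg1_meas hκt_meas) ?_
      filter_upwards [hg1_bd] with ω hω
      calc |g1 ω * κt ω| = |g1 ω| * |κt ω| := abs_mul _ _
        _ ≤ (Cv * |CQ|) * 1 :=
            mul_le_mul hω (hκt_bd ω) (abs_nonneg _) (mul_nonneg hCv0 (abs_nonneg _))
        _ = Cv * |CQ| := mul_one _
    have hvR_bd : ∀ᵐ ω ∂P, |v ω * R ω| ≤ Cv := by
      filter_upwards [hv_bd] with ω hω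
      calc |v ω * R ω| = |v ω| * |R ω| := abs_mul _ _
        _ ≤ Cv * 1 := mul_le_mul hω (hR_bd ω) (abs_nonneg _) hCv0
        _ = Cv := mul_one _
    have i3 : Integrable (fun ω => (v ω * R ω) * Y ω) P :=
      hbY_int _ Cv (Measurable.mul hv_meas hR) hvR_bd
    have i4 : Integrable (fun ω => (v ω * κt ω) * Y ω) P :=
      hbY_int _ Cv (Measurable.mul hv_meas hκt_meas) hvκ_bd
    -- the product rule from conditional independence
    have K := condexp_mul_of_condIndepFun (mΩ := mΩ) (P := P) (m := m) (hm := hm) hY hR hR01 hYint hYR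
    have K' : P[(fun ω => R ω * Y ω) | m] =ᵐ[P] fun ω => κt ω * (P[Y | m]) ω := by
      filter_upwards [K, hπver] with ω h1 h2
      rw [h1, ← h2]
    -- E1
    have E1 : ∫ ω, g1 ω * R ω ∂P = ∫ ω, g1 ω * κt ω ∂P := by
      have hpull : P[(fun ω => g1 ω * R ω) | m] =ᵐ[P] fun ω => g1 ω * (P[R | m]) ω := by
        have h := condExp_stronglyMeasurable_mul_of_bound hm
          (hg1_m.stronglyMeasurable) hRint (Cv * |CQ|)
          (hg1_bd.mono fun ω hω => by simpa [Real.norm_eq_abs] using hω)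
        exact h
      calc ∫ ω, g1 ω * R ω ∂P
          = ∫ ω, (P[(fun ω => g1 ω * R ω) | m]) ω ∂P := (integral_condExp hm).symm
        _ = ∫ ω, g1 ω * (P[R | m]) ω ∂P := integral_congr_ae hpull
        _ = ∫ ω, g1 ω * κt ω ∂P := by
            refine integral_congr_ae ?_
            filter_upwards [hπver] with ω hω
            rw [← hω]
    -- E2
    have E2 : ∫ ω, (v ω * R ω) * Y ω ∂P = ∫ ω, (v ω * κt ω) * Y ω ∂P := by
      have hpull1 : P[(fun ω => v ω * (R ω * Y ω)) | m]
          =ᵐ[P] fun ω => v ω * (P[(fun ω => R ω * Y ω) | m]) ω := by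
        have h := condExp_stronglyMeasurable_mul_of_bound hm
          (hv_m.stronglyMeasurable) hRY_int Cv
          (hv_bd.mono fun ω hω => by simpa [Real.norm_eq_abs] using hω)
        exact h
      have hpull2 : P[(fun ω => (v ω * κt ω) * Y ω) | m]
          =ᵐ[P] fun ω => (v ω * κt ω) * (P[Y | m]) ω := by
        have h := condExp_stronglyMeasurable_mul_of_bound hm
          (hvκ_m.stronglyMeasurable) hYint Cv
          (hvκ_bd.mono fun ω hω => by simpa [Real.norm_eq_abs, abs_mul] using hω)
        exact h
      calc ∫ ω, (v ω * R ω) * Y ω ∂P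
          = ∫ ω, v ω * (R ω * Y ω) ∂P := by simp_rw [mul_assoc]
        _ = ∫ ω, (P[(fun ω => v ω * (R ω * Y ω)) | m]) ω ∂P := (integral_condExp hm).symm
        _ = ∫ ω, v ω * (P[(fun ω => R ω * Y ω) | m]) ω ∂P := integral_congr_ae hpull1
        _ = ∫ ω, (v ω * κt ω) * (P[Y | m]) ω ∂P := by
            refine integral_congr_ae ?_
            filter_upwards [K'] with ω hω
            rw [hω]; ring
        _ = ∫ ω, (P[(fun ω => (v ω * κt ω) * Y ω) | m]) ω ∂P := (integral_congr_ae hpull2).symm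
        _ = ∫ ω, (v ω * κt ω) * Y ω ∂P := integral_condExp hm
    -- the correction term
    set f : Ω → ℝ := fun ω => v ω * (R ω - κt ω) * (Q (t ω) - Y ω) with hf_def
    have hsplit : ∀ ω, f ω = (g1 ω * R ω - g1 ω * κt ω)
        - ((v ω * R ω) * Y ω - (v ω * κt ω) * Y ω) := by
      intro ω
      simp only [hf_def, hg1_def]
      ring
    have hf_int : Integrable f P := by
      refine (((i1.sub i2).sub (i3.sub i4)).congr ?_)
      exact Eventually.of_forall fun ω => (hsplit ω).symm
    have hf0 : ∫ ω, f ω ∂P = 0 := by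
      calc ∫ ω, f ω ∂P
          = ∫ ω, ((g1 ω * R ω - g1 ω * κt ω)
              - ((v ω * R ω) * Y ω - (v ω * κt ω) * Y ω)) ∂P :=
            integral_congr_ae (Eventually.of_forall hsplit)
        _ = (∫ ω, (g1 ω * R ω - g1 ω * κt ω) ∂P)
              - ∫ ω, ((v ω * R ω) * Y ω - (v ω * κt ω) * Y ω) ∂P :=
            integral_sub (i1.sub i2) (i3.sub i4)
        _ = ((∫ ω, g1 ω * R ω ∂P) - ∫ ω, g1 ω * κt ω ∂P)
              - ((∫ ω, (v ω * R ω) * Y ω ∂P) - ∫ ω, (v ω * κt ω) * Y ω ∂P) := by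
            rw [integral_sub i1 i2, integral_sub i3 i4]
        _ = 0 := by rw [E1, E2]; ring
    -- pointwise decomposition of the score
    set g : Ω → ℝ := fun ω => (deriv b (X ω ⬝ᵥ β) - Y ω) * X ω i with hg_def
    have hpt : ∀ ω, aipwScore X Z Y R b β π Q ω i = g ω + f ω := by
      intro ω
      have h0 : π (t ω) ≠ 0 := ne_of_gt (hπrange (t ω)).1
      simp only [aipwScore, hg_def, hf_def, hv_def, hκt_def, ← ht_def]
      field_simp
      ring
    by_cases hgint : Integrable g P
    · calc ∫ ω, aipwScore X Z Y R b β π Q ω i ∂P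
          = ∫ ω, (g ω + f ω) ∂P := integral_congr_ae (Eventually.of_forall hpt)
        _ = (∫ ω, g ω ∂P) + ∫ ω, f ω ∂P := integral_add hgint hf_int
        _ = ∫ ω, g ω ∂P := by rw [hf0, add_zero]
    · have h1 : ¬ Integrable (fun ω => g ω + f ω) P := by
        intro h
        exact hgint ((h.sub hf_int).congr (Eventually.of_forall fun ω => by simp))
      have h2 : ¬ Integrable (fun ω => aipwScore X Z Y R b β π Q ω i) P := by
        intro h
        exact h1 (h.congr (Eventually.of_forall hpt))
      rw [integral_undef h2, integral_undef hgint]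
  exact ⟨main, fun β Q hQm hQbd hzero i => by rw [main β Q hQm hQbd i]; exact hzero i⟩
end

section
/- Assume the regularity condition: for mu-almost every w, J_1(w) = 0 implies J_0(w) = 0. Define pi_*^{-1}(w) = 1 + (1 - rho) J_0(w) / (rho J_1(w)) on the set {w : J_1(w) != 0}, and pi_*^{-1}(w) = 1 on {J_1(w) = 0}. Then pi_*^{-1} is well defined mu-almost everywhere on {J_1 != 0}, and the function x̃ -> pi_*^{-1}(Gamma^T x̃) solves the weighting equation: for every bounded measurable f: R^d -> R, E[(R * pi_*^{-1}(W) - 1) f(W) <X, v>] = 0. (Existence part of Theorem 2.) -/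
open MeasureTheory ProbabilityTheory Matrix

/-- `Γᵀ x` for a `(p+1) × d` matrix `Γ` and `x ∈ ℝ^{p+1}`. -/
noncomputable def matT {n d : ℕ} (Γ : Matrix (Fin n) (Fin d) ℝ) (x : Fin n → ℝ) : Fin d → ℝ :=
  fun j => ∑ i, Γ i j * x i

/-- The weighting function `π_*⁻¹(w) = 1 + (1 - ρ) J₀(w) / (ρ J₁(w))` on `{J₁ ≠ 0}`,
set to `1` on `{J₁ = 0}`. -/
noncomputable def piStarInv {d : ℕ} (ρ : ℝ) (J0 J1 : (Fin d → ℝ) → ℝ) (w : Fin d → ℝ) : ℝ :=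
  if J1 w ≠ 0 then 1 + (1 - ρ) * J0 w / (ρ * J1 w) else 1

/-- Auxiliary: pushing an integral against a conditional expectation down to the density. -/
lemma aux_cond_push {Ω : Type*} [MeasurableSpace Ω] (Q : Measure Ω) [IsProbabilityMeasure Q]
    {d : ℕ} (W : Ω → Fin d → ℝ) (hW : Measurable W)
    (h : Ω → ℝ) (hh : Integrable h Q)
    (a : (Fin d → ℝ) → ℝ) (ham : Measurable a)
    (haver : (fun ω => a (W ω)) =ᵐ[Q]
      Q[h | MeasurableSpace.comap W inferInstance])
    (φ : (Fin d → ℝ) → ℝ) (hφ : Measurable φ)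
    (hint : Integrable (fun ω => φ (W ω) * h ω) Q)
    (μ : Measure (Fin d → ℝ)) (η : (Fin d → ℝ) → ℝ) (hηm : Measurable η)
    (hη0 : ∀ w, 0 ≤ η w)
    (hdens : Measure.map W Q = μ.withDensity fun w => ENNReal.ofReal (η w)) :
    (∫ ω, φ (W ω) * h ω ∂Q = ∫ w, φ w * a w * η w ∂μ)
      ∧ Integrable (fun w => φ w * a w * η w) μ := by
  have hm : MeasurableSpace.comap W inferInstance ≤ ‹MeasurableSpace Ω› := hW.comap_le
  have hWm : Measurable[MeasurableSpace.comap W inferInstance] W :=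
    Measurable.of_comap_le le_rfl
  have hφWm : StronglyMeasurable[MeasurableSpace.comap W inferInstance] fun ω => φ (W ω) :=
    ((hφ.comp hWm).stronglyMeasurable)
  -- pull-out property
  have hpull : Q[(fun ω => φ (W ω)) * h | MeasurableSpace.comap W inferInstance] =ᵐ[Q] (fun ω => φ (W ω)) * Q[h | MeasurableSpace.comap W inferInstance] :=
    condExp_mul_of_stronglyMeasurable_left hφWm hint hh
  have hintc : Integrable (fun ω => φ (W ω) * (Q[h | MeasurableSpace.comap W inferInstance]) ω) Q := by
    have := (integrable_condExp (f := (fun ω => φ (W ω)) * h) (m := MeasurableSpace.comap W inferInstance) (μ := Q)).congr hpull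
    exact this
  have hintaW : Integrable (fun ω => φ (W ω) * a (W ω)) Q := by
    refine hintc.congr ?_
    filter_upwards [haver] with ω hω
    rw [hω]
  have step1 : ∫ ω, φ (W ω) * h ω ∂Q = ∫ ω, φ (W ω) * a (W ω) ∂Q := by
    have e1 : ∫ ω, φ (W ω) * h ω ∂Q = ∫ ω, (Q[(fun ω => φ (W ω)) * h | MeasurableSpace.comap W inferInstance]) ω ∂Q := by
      rw [integral_condExp hm]; rfl
    rw [e1, integral_congr_ae hpull]
    refine integral_congr_ae ?_
    filter_upwards [haver] with ω hω
    simp only [Pi.mul_apply]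
    rw [hω]
  -- push to μ
  have hmap : ∫ ω, φ (W ω) * a (W ω) ∂Q = ∫ w, φ w * a w ∂(Measure.map W Q) := by
    rw [integral_map hW.aemeasurable (show AEStronglyMeasurable (fun w => φ w * a w) (Measure.map W Q) from (hφ.mul ham).aestronglyMeasurable)]
  have hηnn : Measurable fun w => (η w).toNNReal := hηm.real_toNNReal
  have hwd : ∫ w, φ w * a w ∂(Measure.map W Q) = ∫ w, φ w * a w * η w ∂μ := by
    rw [hdens]
    have : (fun w => ENNReal.ofReal (η w)) = fun w => ((η w).toNNReal : ENNReal) := rfl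
    rw [this, integral_withDensity_eq_integral_smul hηnn]
    refine integral_congr_ae (Filter.Eventually.of_forall fun w => ?_)
    simp [NNReal.smul_def, Real.coe_toNNReal _ (hη0 w)]
    ring
  have hintμ : Integrable (fun w => φ w * a w * η w) μ := by
    have h1 : Integrable (fun w => φ w * a w) (Measure.map W Q) := by
      rw [integrable_map_measure (show AEStronglyMeasurable (fun w => φ w * a w) (Measure.map W Q) from (hφ.mul ham).aestronglyMeasurable) hW.aemeasurable]
      exact hintaW
    rw [hdens] at h1
    rw [integrable_withDensity_iff (by measurability)
      (Filter.Eventually.of_forall fun w => ENNReal.ofReal_lt_top)] at h1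
    refine h1.congr (Filter.Eventually.of_forall fun w => ?_)
    simp [ENNReal.toReal_ofReal (hη0 w)]
  exact ⟨by rw [step1, hmap, hwd], hintμ⟩

/-- **existence part of Theorem 2.** Under the regularity condition that
`J₁(w) = 0 → J₀(w) = 0` for `μ`-a.e. `w` (where `J_r = a_r η_r`), the function `π_*⁻¹` is well
defined `μ`-a.e. on `{J₁ ≠ 0}` (the denominator `ρ J₁` does not vanish there), and
`x̃ ↦ π_*⁻¹(Γᵀ x̃)` solves the weighting equation:
`E[(R π_*⁻¹(W) - 1) f(W) ⟨X, v⟩] = 0` for every bounded measurable `f`. -/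
theorem piStarInv_solves_weighting_equation
    {Ω : Type*} [MeasurableSpace Ω] {P : Measure Ω}
    [IsProbabilityMeasure P] {p d : ℕ}
    (X : Ω → Fin p → ℝ) (Z R : Ω → ℝ)
    (hX : Measurable X) (hZ : Measurable Z) (hR : Measurable R)
    (hXbd : ∃ C, ∀ ω i, |X ω i| ≤ C) (hZbd : ∃ C, ∀ ω, |Z ω| ≤ C)
    (hR01 : ∀ ω, R ω = 0 ∨ R ω = 1)
    (Γ : Matrix (Fin (p + 1)) (Fin d) ℝ) (v : Fin p → ℝ)
    -- `ρ = P(R = 1) ∈ (0, 1)`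
    (ρ : ℝ) (hρdef : ρ = (P {ω | R ω = 1}).toReal) (hρ0 : 0 < ρ) (hρ1 : ρ < 1)
    -- density setup: the conditional law of `W` given `R = r` has density `η_r` w.r.t. `μ`
    (μ : Measure (Fin d → ℝ)) (hμ : SigmaFinite μ)
    (η₀ η₁ : (Fin d → ℝ) → ℝ) (hη₀m : Measurable η₀) (hη₁m : Measurable η₁)
    (hη₀0 : ∀ w, 0 ≤ η₀ w) (hη₁0 : ∀ w, 0 ≤ η₁ w)
    (hdens₀ : Measure.map (fun ω => matT Γ (tilde Z X ω)) (P[|{ω | R ω = 0}])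
      = μ.withDensity fun w => ENNReal.ofReal (η₀ w))
    (hdens₁ : Measure.map (fun ω => matT Γ (tilde Z X ω)) (P[|{ω | R ω = 1}])
      = μ.withDensity fun w => ENNReal.ofReal (η₁ w))
    -- `a_r(W)` is a version of `E[⟨X, v⟩ ∣ σ(W)]` under `P(· ∣ R = r)`
    (a₀ a₁ : (Fin d → ℝ) → ℝ) (ha₀m : Measurable a₀) (ha₁m : Measurable a₁)
    (ha₀ver : (fun ω => a₀ (matT Γ (tilde Z X ω))) =ᵐ[P[|{ω | R ω = 0}]]
      (P[|{ω | R ω = 0}])[fun ω => X ω ⬝ᵥ v |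
        MeasurableSpace.comap (fun ω => matT Γ (tilde Z X ω)) inferInstance])
    (ha₁ver : (fun ω => a₁ (matT Γ (tilde Z X ω))) =ᵐ[P[|{ω | R ω = 1}]]
      (P[|{ω | R ω = 1}])[fun ω => X ω ⬝ᵥ v |
        MeasurableSpace.comap (fun ω => matT Γ (tilde Z X ω)) inferInstance])
    -- regularity condition: for `μ`-a.e. `w`, `J₁(w) = 0` implies `J₀(w) = 0`
    (hreg : ∀ᵐ w ∂μ, a₁ w * η₁ w = 0 → a₀ w * η₀ w = 0) :
    -- `π_*⁻¹` is well defined `μ`-a.e. on `{J₁ ≠ 0}` ...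
    (∀ᵐ w ∂μ, a₁ w * η₁ w ≠ 0 → ρ * (a₁ w * η₁ w) ≠ 0) ∧
      -- ... and it solves the weighting equation
      ∀ f : (Fin d → ℝ) → ℝ, Measurable f → (∃ C, ∀ w, |f w| ≤ C) →
        ∫ ω, (R ω * piStarInv ρ (fun w => a₀ w * η₀ w) (fun w => a₁ w * η₁ w)
            (matT Γ (tilde Z X ω)) - 1) * f (matT Γ (tilde Z X ω)) * (X ω ⬝ᵥ v) ∂P = 0 := by
  classical
  -- measurability of the basic maps
  have htil : Measurable (tilde Z X) := by
    refine measurable_pi_lambda _ fun i => ?_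
    refine Fin.cases ?_ ?_ i
    · simpa [tilde] using hZ
    · intro j
      simpa [tilde, Function.comp_def] using (measurable_pi_apply j).comp hX
  set W : Ω → Fin d → ℝ := fun ω => matT Γ (tilde Z X ω) with hW_def
  have hW : Measurable W := by
    refine measurable_pi_lambda _ fun j => ?_
    simp only [hW_def, matT]
    exact Finset.measurable_sum _ fun i _ =>
      ((measurable_pi_apply i).comp htil).const_mul _
  have hip : Measurable fun ω => X ω ⬝ᵥ v := by
    have : (fun ω => X ω ⬝ᵥ v) = fun ω => ∑ i, X ω i * v i := rfl
    rw [this]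
    exact Finset.measurable_sum _ fun i _ => ((measurable_pi_apply i).comp hX).mul_const _
  -- bound on the inner product
  obtain ⟨CX, hCX⟩ := hXbd
  set B : ℝ := ∑ i : Fin p, CX * |v i| with hB_def
  have hip_bd : ∀ ω, |X ω ⬝ᵥ v| ≤ B := by
    intro ω
    have h1 : X ω ⬝ᵥ v = ∑ i, X ω i * v i := rfl
    rw [h1]
    calc |∑ i, X ω i * v i| ≤ ∑ i, |X ω i * v i| := Finset.abs_sum_le_sum_abs _ _
      _ ≤ B := Finset.sum_le_sum fun i _ => by
          rw [abs_mul]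
          exact mul_le_mul_of_nonneg_right (hCX ω i) (abs_nonneg _)
  -- the event `A = {R = 1}`
  set A : Set Ω := {ω | R ω = 1} with hA_def
  have hA : MeasurableSet A := hR (measurableSet_singleton 1)
  have hAc : {ω | R ω = 0} = Aᶜ := by
    ext ω
    simp only [Set.mem_setOf_eq, Set.mem_compl_iff, hA_def]
    rcases hR01 ω with h | h <;> simp [h]
  rw [hAc] at hdens₀ ha₀ver
  have hPA0 : P A ≠ 0 := fun h => hρ0.ne' (by simp [hρdef, h])
  have hPAc : P Aᶜ = 1 - P A := prob_compl_eq_one_sub hA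
  have hPAc_toReal : (P Aᶜ).toReal = 1 - ρ := by
    rw [hPAc, ENNReal.toReal_sub_of_le prob_le_one (by simp), ENNReal.toReal_one, hρdef]
  have hPAc0 : P Aᶜ ≠ 0 := by
    intro h
    rw [h] at hPAc_toReal
    simp at hPAc_toReal
    linarith
  haveI hP1 : IsProbabilityMeasure (P[|A]) := cond_isProbabilityMeasure hPA0
  haveI hP0 : IsProbabilityMeasure (P[|Aᶜ]) := cond_isProbabilityMeasure hPAc0
  -- relating set integrals over `P` to integrals over the conditional measures
  have cond_int : ∀ (s : Set Ω), P s ≠ 0 → ∀ h : Ω → ℝ,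
      ∫ ω in s, h ω ∂P = (P s).toReal * ∫ ω, h ω ∂(P[|s]) := by
    intro s hs h
    have hrfl : P[|s] = (P s)⁻¹ • P.restrict s := rfl
    rw [hrfl, integral_smul_measure, ENNReal.toReal_inv, smul_eq_mul, ← mul_assoc,
      mul_inv_cancel₀ (ENNReal.toReal_ne_zero.mpr ⟨hs, measure_ne_top P s⟩), one_mul]
  have cond_integrable : ∀ (s : Set Ω), P s ≠ 0 → ∀ h : Ω → ℝ, Integrable h P →
      Integrable h (P[|s]) := by
    intro s hs h hh
    have hrfl : P[|s] = (P s)⁻¹ • P.restrict s := rfl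
    rw [hrfl]
    exact (integrable_smul_measure (ENNReal.inv_ne_zero.mpr (measure_ne_top P s))
      (ENNReal.inv_ne_top.mpr hs)).mpr hh.restrict
  -- the weight function
  set g : (Fin d → ℝ) → ℝ :=
    piStarInv ρ (fun w => a₀ w * η₀ w) (fun w => a₁ w * η₁ w) with hg_def
  have hgm : Measurable g := by
    rw [hg_def]
    unfold piStarInv
    refine Measurable.ite ?_ ?_ measurable_const
    · exact ((ha₁m.mul hη₁m) (measurableSet_singleton 0)).compl
    · exact measurable_const.add
        ((measurable_const.mul (ha₀m.mul hη₀m)).div (measurable_const.mul (ha₁m.mul hη₁m)))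
  refine ⟨Filter.Eventually.of_forall fun w hw => mul_ne_zero hρ0.ne' hw, ?_⟩
  intro f hfm hfbd
  obtain ⟨Cf, hCf⟩ := hfbd
  set h₁ : Ω → ℝ := fun ω => R ω * g (W ω) * f (W ω) * (X ω ⬝ᵥ v) with hh₁
  set h₂ : Ω → ℝ := fun ω => f (W ω) * (X ω ⬝ᵥ v) with hh₂
  have hFsplit : (fun ω => (R ω * g (W ω) - 1) * f (W ω) * (X ω ⬝ᵥ v))
      = fun ω => h₁ ω - h₂ ω := by
    funext ω
    simp only [hh₁, hh₂]
    ring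
  have h₂m : Measurable h₂ := (hfm.comp hW).mul hip
  have h₂bd : ∀ ω, ‖h₂ ω‖ ≤ Cf * B := by
    intro ω
    have hrfl : h₂ ω = f (W ω) * (X ω ⬝ᵥ v) := rfl
    rw [Real.norm_eq_abs, hrfl, abs_mul]
    exact mul_le_mul (hCf (W ω)) (hip_bd ω) (abs_nonneg _)
      (le_trans (abs_nonneg (f (W ω))) (hCf (W ω)))
  have h₂int : ∀ (Q : Measure Ω), IsProbabilityMeasure Q → Integrable h₂ Q := by
    intro Q hQ
    exact (integrable_const (Cf * B)).mono' h₂m.aestronglyMeasurable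
      (Filter.Eventually.of_forall h₂bd)
  have hipint : ∀ (Q : Measure Ω), IsProbabilityMeasure Q →
      Integrable (fun ω => X ω ⬝ᵥ v) Q := by
    intro Q hQ
    exact (integrable_const B).mono' hip.aestronglyMeasurable
      (Filter.Eventually.of_forall fun ω => by
        simpa [Real.norm_eq_abs] using hip_bd ω)
  have hgoal : (∫ ω, (R ω * g (W ω) - 1) * f (W ω) * (X ω ⬝ᵥ v) ∂P)
      = ∫ ω, (h₁ ω - h₂ ω) ∂P := by rw [hFsplit]
  by_cases hint1 : Integrable h₁ P
  swap
  · -- non-integrable case: both sides of the Bochner integral are zero by convention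
    rw [hgoal]
    refine integral_undef fun hF => hint1 ?_
    have := hF.add (h₂int P inferInstance)
    refine this.congr (Filter.Eventually.of_forall fun ω => ?_)
    simp only [Pi.add_apply]
    ring
  -- integrable case
  have hint1A : Integrable h₁ (P[|A]) := cond_integrable A hPA0 h₁ hint1
  have hmemA : ∀ᵐ ω ∂(P[|A]), ω ∈ A := by
    have hac : (P[|A]) ≪ P.restrict A := by
      have hrfl : P[|A] = (P A)⁻¹ • P.restrict A := rfl
      rw [hrfl]
      exact Measure.smul_absolutelyContinuous
    exact Filter.Eventually.filter_mono hac.ae_le (ae_restrict_mem hA)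
  have h₁eqA : h₁ =ᵐ[P[|A]] fun ω => (g (W ω) * f (W ω)) * (X ω ⬝ᵥ v) := by
    filter_upwards [hmemA] with ω hω
    have hR1 : R ω = 1 := hω
    simp only [hh₁, hR1]
    ring
  -- push the three integrals down to μ
  obtain ⟨e1, i1⟩ := aux_cond_push (P[|A]) W hW (fun ω => X ω ⬝ᵥ v)
    (hipint _ hP1) a₁ ha₁m ha₁ver f hfm (h₂int _ hP1) μ η₁ hη₁m hη₁0 hdens₁
  obtain ⟨e0, i0⟩ := aux_cond_push (P[|Aᶜ]) W hW (fun ω => X ω ⬝ᵥ v)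
    (hipint _ hP0) a₀ ha₀m ha₀ver f hfm (h₂int _ hP0) μ η₀ hη₀m hη₀0 hdens₀
  obtain ⟨eg, ig⟩ := aux_cond_push (P[|A]) W hW (fun ω => X ω ⬝ᵥ v)
    (hipint _ hP1) a₁ ha₁m ha₁ver (fun w => g w * f w) (hgm.mul hfm)
    (hint1A.congr h₁eqA) μ η₁ hη₁m hη₁0 hdens₁
  -- the pointwise a.e. identity on μ
  have hae : ∀ᵐ w ∂μ, ρ * ((fun w => g w * f w) w * a₁ w * η₁ w)
      = ρ * (f w * a₁ w * η₁ w) + (1 - ρ) * (f w * a₀ w * η₀ w) := by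
    filter_upwards [hreg] with w hw
    show ρ * ((g w * f w) * a₁ w * η₁ w) = _
    by_cases h0 : a₁ w * η₁ w = 0
    · have h0' := hw h0
      have hg1 : g w = 1 := by simp [hg_def, piStarInv, h0]
      rw [hg1]
      linear_combination (-(1 - ρ) * f w) * h0'
    · have hgw : g w = 1 + (1 - ρ) * (a₀ w * η₀ w) / (ρ * (a₁ w * η₁ w)) := by
        simp [hg_def, piStarInv, h0]
      rw [hgw]
      have hd : ρ * (a₁ w * η₁ w) ≠ 0 := mul_ne_zero hρ0.ne' h0
      linear_combination ((1 - ρ) * (a₀ w * η₀ w) * f w) * mul_inv_cancel₀ hd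
  have i1' : Integrable (fun w => ρ * (f w * a₁ w * η₁ w)) μ := i1.const_mul ρ
  have i0' : Integrable (fun w => (1 - ρ) * (f w * a₀ w * η₀ w)) μ := i0.const_mul (1 - ρ)
  have hμeq : ρ * (∫ w, (fun w => g w * f w) w * a₁ w * η₁ w ∂μ)
      = ρ * (∫ w, f w * a₁ w * η₁ w ∂μ) + (1 - ρ) * (∫ w, f w * a₀ w * η₀ w ∂μ) := by
    rw [← integral_const_mul, integral_congr_ae hae, integral_add i1' i0',
      integral_const_mul, integral_const_mul]
  -- the two halves of the total integral
  have hsplit2 : ∫ ω, h₂ ω ∂P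
      = ρ * (∫ w, f w * a₁ w * η₁ w ∂μ) + (1 - ρ) * (∫ w, f w * a₀ w * η₀ w ∂μ) := by
    rw [← integral_add_compl hA (h₂int P inferInstance), cond_int A hPA0 h₂,
      cond_int Aᶜ hPAc0 h₂, ← hρdef, hPAc_toReal]
    have e1' : ∫ ω, h₂ ω ∂(P[|A]) = ∫ w, f w * a₁ w * η₁ w ∂μ := e1
    have e0' : ∫ ω, h₂ ω ∂(P[|Aᶜ]) = ∫ w, f w * a₀ w * η₀ w ∂μ := e0
    rw [e1', e0']
  have hsplit1 : ∫ ω, h₁ ω ∂P = ρ * (∫ w, (fun w => g w * f w) w * a₁ w * η₁ w ∂μ) := by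
    rw [← integral_add_compl hA hint1]
    have hz : ∫ ω in Aᶜ, h₁ ω ∂P = 0 := by
      refine setIntegral_eq_zero_of_forall_eq_zero fun ω hω => ?_
      have hR0 : R ω = 0 := (hR01 ω).resolve_right hω
      simp [hh₁, hR0]
    rw [hz, add_zero, cond_int A hPA0 h₁, ← hρdef, integral_congr_ae h₁eqA]
    have eg' : (∫ ω, (g (W ω) * f (W ω)) * (X ω ⬝ᵥ v) ∂(P[|A]))
        = ∫ w, (fun w => g w * f w) w * a₁ w * η₁ w ∂μ := eg
    rw [eg']
  rw [hgoal, integral_sub hint1 (h₂int P inferInstance), hsplit1, hsplit2, hμeq]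
  ring
end

section
/- Let h: R^{p+1} -> R be bounded measurable. Let m_h(W) be a version of E[h(X̃) <X, v> | sigma(W)] and m_1(W) a version of E[<X, v> | sigma(W)], both computed under the conditional probability measure P(. | R = 1), and suppose m_1(W) != 0 almost surely under P(. | R = 1). Define the operator T by (Th)(x̃) = h(x̃) - m_h(Gamma^T x̃) / m_1(Gamma^T x̃). Then for every bounded measurable f: R^d -> R, E[R * (Th)(X̃) * f(W) * <X, v>] = 0. Consequently, if a measurable u solves the weighting equation, then so does u + Th for every such h. (The 'plus Th' part of Theorem 2.) -/
open MeasureTheory ProbabilityTheory Matrix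

/-- A measurable `u : ℝ^{p+1} → ℝ` solves the weighting equation if
`E[(R u(X̃) - 1) f(W) ⟨X, v⟩] = 0` for every bounded measurable `f : ℝ^d → ℝ`. -/
def SolvesWeighting {Ω : Type*} [MeasurableSpace Ω] (P : Measure Ω) {p d : ℕ}
    (X : Ω → Fin p → ℝ) (Z R : Ω → ℝ) (Γ : Matrix (Fin (p + 1)) (Fin d) ℝ) (v : Fin p → ℝ)
    (u : (Fin (p + 1) → ℝ) → ℝ) : Prop :=
  ∀ f : (Fin d → ℝ) → ℝ, Measurable f → (∃ C, ∀ w, |f w| ≤ C) →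
    ∫ ω, (R ω * u (tilde Z X ω) - 1) * f (matT Γ (tilde Z X ω)) * (X ω ⬝ᵥ v) ∂P = 0

/- ### Auxiliary lemmas -/

lemma abs_mul_le' {a b A B : ℝ} (ha : |a| ≤ A) (hb : |b| ≤ B) : |a * b| ≤ A * B := by
  rw [abs_mul]
  exact mul_le_mul ha hb (abs_nonneg _) ((abs_nonneg a).trans ha)

lemma bdd_integrable {Ω : Type*} [MeasurableSpace Ω] (μ : Measure Ω) [IsFiniteMeasure μ]
    {G : Ω → ℝ} (hG : Measurable G) {C : ℝ} (hC : ∀ ω, |G ω| ≤ C) :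
    Integrable G μ :=
  (integrable_const C).mono' hG.aestronglyMeasurable
    (Filter.Eventually.of_forall fun ω => by simpa [Real.norm_eq_abs] using hC ω)

/-- Core lemma: under a probability measure, with `m = σ(W)`,
`∫ (H - mh(W)/m1(W)) f(W) Y = 0` where `mh(W)` is a version of `E[H Y | m]` and
`m1(W)` a version of `E[Y | m]` with `m1(W) ≠ 0` a.e. -/
lemma aux_core {Ω : Type*} [mΩ : MeasurableSpace Ω] (μ : Measure Ω) [IsProbabilityMeasure μ]
    {d : ℕ} (W : Ω → Fin d → ℝ) (hW : Measurable W)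
    (Y H : Ω → ℝ) (hY : Measurable Y) (hH : Measurable H)
    {CY CH : ℝ} (hYbd : ∀ ω, |Y ω| ≤ CY) (hHbd : ∀ ω, |H ω| ≤ CH)
    (mh m1 : (Fin d → ℝ) → ℝ) (hmhm : Measurable mh) (hm1m : Measurable m1)
    (hmhver : (fun ω => mh (W ω)) =ᵐ[μ]
      μ[fun ω => H ω * Y ω | MeasurableSpace.comap W inferInstance])
    (hm1ver : (fun ω => m1 (W ω)) =ᵐ[μ]
      μ[Y | MeasurableSpace.comap W inferInstance])
    (hm1ne : ∀ᵐ ω ∂μ, m1 (W ω) ≠ 0)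
    (f : (Fin d → ℝ) → ℝ) (hf : Measurable f) {Cf : ℝ} (hfbd : ∀ w, |f w| ≤ Cf) :
    ∫ ω, (H ω - mh (W ω) / m1 (W ω)) * f (W ω) * Y ω ∂μ = 0 := by
  have hHY_int : Integrable (fun ω => H ω * Y ω) μ :=
    bdd_integrable μ (hH.mul hY) fun ω => abs_mul_le' (hHbd ω) (hYbd ω)
  have hY_int : Integrable Y μ := bdd_integrable μ hY hYbd
  have hfHY_int : Integrable (fun ω => f (W ω) * (H ω * Y ω)) μ :=
    bdd_integrable μ ((hf.comp hW).mul (hH.mul hY))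
      fun ω => abs_mul_le' (hfbd _) (abs_mul_le' (hHbd ω) (hYbd ω))
  set m := MeasurableSpace.comap W inferInstance with hm_def
  have hm : m ≤ mΩ := hW.comap_le
  haveI : IsFiniteMeasure (μ.trim hm) := isFiniteMeasure_trim hm
  have hWm : Measurable[m] W := Measurable.of_comap_le le_rfl
  have hcomp : ∀ φ : (Fin d → ℝ) → ℝ, Measurable φ →
      StronglyMeasurable[m] fun ω => φ (W ω) :=
    fun φ hφ => (hφ.comp hWm).stronglyMeasurable
  -- first identity
  have e1 : ∫ ω, f (W ω) * (H ω * Y ω) ∂μ = ∫ ω, f (W ω) * mh (W ω) ∂μ := by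
    have hprod : Integrable ((fun ω => f (W ω)) * fun ω => H ω * Y ω) μ := hfHY_int
    have hpull : μ[(fun ω => f (W ω)) * (fun ω => H ω * Y ω)|m] =ᵐ[μ]
        (fun ω => f (W ω)) * μ[fun ω => H ω * Y ω|m] :=
      condExp_mul_of_stronglyMeasurable_left (hcomp f hf) hprod hHY_int
    have h0 : ∫ ω, ((fun ω => f (W ω)) * fun ω => H ω * Y ω) ω ∂μ
        = ∫ ω, f (W ω) * mh (W ω) ∂μ := by
      rw [← integral_condExp hm]
      refine integral_congr_ae ?_
      filter_upwards [hpull, hmhver] with ω h1 h2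
      rw [h1]
      simp only [Pi.mul_apply]
      rw [← h2]
    simpa only [Pi.mul_apply] using h0
  by_cases hF2 : Integrable (fun ω => mh (W ω) / m1 (W ω) * f (W ω) * Y ω) μ
  · -- second identity
    have hprod2 : Integrable ((fun ω => mh (W ω) / m1 (W ω) * f (W ω)) * Y) μ := hF2
    have hpull2 : μ[(fun ω => mh (W ω) / m1 (W ω) * f (W ω)) * Y|m] =ᵐ[μ]
        (fun ω => mh (W ω) / m1 (W ω) * f (W ω)) * μ[Y|m] :=
      condExp_mul_of_stronglyMeasurable_left (hcomp _ (((hmhm.div hm1m)).mul hf)) hprod2 hY_int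
    have e2 : ∫ ω, mh (W ω) / m1 (W ω) * f (W ω) * Y ω ∂μ
        = ∫ ω, f (W ω) * mh (W ω) ∂μ := by
      have h0 : ∫ ω, ((fun ω => mh (W ω) / m1 (W ω) * f (W ω)) * Y) ω ∂μ
          = ∫ ω, f (W ω) * mh (W ω) ∂μ := by
        rw [← integral_condExp hm]
        refine integral_congr_ae ?_
        filter_upwards [hpull2, hm1ver, hm1ne] with ω h1 h2 h3
        rw [h1]
        simp only [Pi.mul_apply]
        rw [← h2]
        field_simp
      simpa only [Pi.mul_apply] using h0
    have hsub : (fun ω => (H ω - mh (W ω) / m1 (W ω)) * f (W ω) * Y ω)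
        = fun ω => f (W ω) * (H ω * Y ω) - mh (W ω) / m1 (W ω) * f (W ω) * Y ω := by
      funext ω; ring
    rw [hsub, integral_sub hfHY_int hF2, e1, e2, sub_self]
  · apply integral_undef
    intro hcon
    apply hF2
    have h2 := hfHY_int.sub hcon
    refine h2.congr (Filter.Eventually.of_forall fun ω => ?_)
    simp only [Pi.sub_apply]
    ring

/-- Transfer: `∫ R·G dP = P(R=1) ∫ G dP[|R=1]` for `R ∈ {0,1}`. -/
lemma cond_transfer {Ω : Type*} [MeasurableSpace Ω] (P : Measure Ω) [IsFiniteMeasure P]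
    (R : Ω → ℝ) (hR : Measurable R) (hR01 : ∀ ω, R ω = 0 ∨ R ω = 1)
    (hρ : P {ω | R ω = 1} ≠ 0) (G : Ω → ℝ) :
    ∫ ω, R ω * G ω ∂P
      = (P {ω | R ω = 1}).toReal * ∫ ω, G ω ∂(P[|{ω | R ω = 1}]) := by
  have hs : MeasurableSet {ω | R ω = 1} := hR (measurableSet_singleton 1)
  have h1 : (fun ω => R ω * G ω) = Set.indicator {ω | R ω = 1} G := by
    funext ω
    rcases hR01 ω with h | h
    · simp [Set.indicator_apply, Set.mem_setOf_eq, h]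
    · simp [Set.indicator_apply, Set.mem_setOf_eq, h]
  rw [h1, integral_indicator hs]
  unfold ProbabilityTheory.cond
  rw [integral_smul_measure, ENNReal.toReal_inv, smul_eq_mul, ← mul_assoc,
    mul_inv_cancel₀ (ENNReal.toReal_ne_zero.mpr ⟨hρ, measure_ne_top _ _⟩), one_mul]

/-- Truncation of `f` to the region where `|g| ≤ n`. -/
noncomputable def truncF {α : Type*} (g f : α → ℝ) (n : ℕ) (w : α) : ℝ :=
  if |g w| ≤ (n : ℝ) then f w else 0

lemma truncF_meas {α : Type*} [MeasurableSpace α] {g f : α → ℝ}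
    (hg : Measurable g) (hf : Measurable f) (n : ℕ) : Measurable (truncF g f n) :=
  Measurable.ite (measurableSet_le hg.abs measurable_const) hf measurable_const

lemma truncF_bd {α : Type*} {g f : α → ℝ} {C : ℝ} (hC : ∀ w, |f w| ≤ C) (hC0 : 0 ≤ C)
    (n : ℕ) (w : α) : |truncF g f n w| ≤ C := by
  unfold truncF
  by_cases hc : |g w| ≤ (n : ℝ)
  · simpa [hc] using hC w
  · simpa [hc] using hC0

/-- **the `+ 𝒯h` part of Theorem 2.** For bounded measurable `h`, with
`(𝒯h)(x̃) = h(x̃) - m_h(Γᵀ x̃) / m₁(Γᵀ x̃)`, where `m_h(W)` is a version of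
`E[h(X̃) ⟨X, v⟩ ∣ σ(W)]` and `m₁(W)` a version of `E[⟨X, v⟩ ∣ σ(W)]`, both under
`P(· ∣ R = 1)`, and `m₁(W) ≠ 0` a.s. under `P(· ∣ R = 1)`:
`E[R (𝒯h)(X̃) f(W) ⟨X, v⟩] = 0` for every bounded measurable `f`; consequently, if `u` solves
the weighting equation, then so does `u + 𝒯h`. -/
theorem add_Th_solves_weighting_equation
    {Ω : Type*} [MeasurableSpace Ω] {P : Measure Ω}
    [IsProbabilityMeasure P] {p d : ℕ}
    (X : Ω → Fin p → ℝ) (Z R : Ω → ℝ)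
    (hX : Measurable X) (hZ : Measurable Z) (hR : Measurable R)
    (hXbd : ∃ C, ∀ ω i, |X ω i| ≤ C) (hZbd : ∃ C, ∀ ω, |Z ω| ≤ C)
    (hR01 : ∀ ω, R ω = 0 ∨ R ω = 1)
    (hρpos : 0 < P {ω | R ω = 1})
    (Γ : Matrix (Fin (p + 1)) (Fin d) ℝ) (v : Fin p → ℝ)
    (h : (Fin (p + 1) → ℝ) → ℝ) (hhm : Measurable h) (hhbd : ∃ C, ∀ x, |h x| ≤ C)
    (mh m1 : (Fin d → ℝ) → ℝ) (hmhm : Measurable mh) (hm1m : Measurable m1)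
    -- `m_h(W)` is a version of `E[h(X̃) ⟨X, v⟩ ∣ σ(W)]` under `P(· ∣ R = 1)`
    (hmhver : (fun ω => mh (matT Γ (tilde Z X ω))) =ᵐ[P[|{ω | R ω = 1}]]
      (P[|{ω | R ω = 1}])[fun ω => h (tilde Z X ω) * (X ω ⬝ᵥ v) |
        MeasurableSpace.comap (fun ω => matT Γ (tilde Z X ω)) inferInstance])
    -- `m₁(W)` is a version of `E[⟨X, v⟩ ∣ σ(W)]` under `P(· ∣ R = 1)`
    (hm1ver : (fun ω => m1 (matT Γ (tilde Z X ω))) =ᵐ[P[|{ω | R ω = 1}]]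
      (P[|{ω | R ω = 1}])[fun ω => X ω ⬝ᵥ v |
        MeasurableSpace.comap (fun ω => matT Γ (tilde Z X ω)) inferInstance])
    (hm1ne : ∀ᵐ ω ∂(P[|{ω | R ω = 1}]), m1 (matT Γ (tilde Z X ω)) ≠ 0) :
    (∀ f : (Fin d → ℝ) → ℝ, Measurable f → (∃ C, ∀ w, |f w| ≤ C) →
        ∫ ω, R ω * (h (tilde Z X ω) - mh (matT Γ (tilde Z X ω)) / m1 (matT Γ (tilde Z X ω)))
          * f (matT Γ (tilde Z X ω)) * (X ω ⬝ᵥ v) ∂P = 0) ∧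
      ∀ u : (Fin (p + 1) → ℝ) → ℝ, Measurable u →
        SolvesWeighting P X Z R Γ v u →
        SolvesWeighting P X Z R Γ v
          (fun x => u x + (h x - mh (matT Γ x) / m1 (matT Γ x))) := by
  classical
  obtain ⟨Cx₀, hCx⟩ := hXbd
  obtain ⟨Ch₀, hCh⟩ := hhbd
  have hρ : P {ω | R ω = 1} ≠ 0 := hρpos.ne'
  haveI : IsProbabilityMeasure (P[|{ω | R ω = 1}]) := cond_isProbabilityMeasure hρ
  -- measurability
  have htilde : Measurable (tilde Z X) := by
    apply measurable_pi_iff.mpr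
    intro i
    refine Fin.cases ?_ (fun j => ?_) i
    · simpa [tilde] using hZ
    · simpa [tilde] using measurable_pi_iff.mp hX j
  have hW : Measurable (fun ω => matT Γ (tilde Z X ω)) := by
    apply measurable_pi_iff.mpr
    intro j
    simp only [matT]
    exact Finset.measurable_sum _ fun i _ =>
      measurable_const.mul ((measurable_pi_apply i).comp htilde)
  have hxv : Measurable (fun ω => X ω ⬝ᵥ v) := by
    show Measurable fun ω => ∑ i, X ω i * v i
    exact Finset.measurable_sum _ fun i _ =>
      ((measurable_pi_apply i).comp hX).mul measurable_const
  -- bounds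
  have hCY : ∀ ω, |X ω ⬝ᵥ v| ≤ max Cx₀ 0 * ∑ i, |v i| := by
    intro ω
    calc |X ω ⬝ᵥ v| ≤ ∑ i, |X ω i * v i| := Finset.abs_sum_le_sum_abs _ _
      _ ≤ ∑ i, max Cx₀ 0 * |v i| := Finset.sum_le_sum fun i _ => by
          rw [abs_mul]
          exact mul_le_mul_of_nonneg_right ((hCx ω i).trans (le_max_left _ _)) (abs_nonneg _)
      _ = max Cx₀ 0 * ∑ i, |v i| := (Finset.mul_sum _ _ _).symm
  have hCY0 : (0:ℝ) ≤ max Cx₀ 0 * ∑ i, |v i| :=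
    mul_nonneg (le_max_right _ _) (Finset.sum_nonneg fun i _ => abs_nonneg _)
  have hCH : ∀ ω, |h (tilde Z X ω)| ≤ max Ch₀ 0 := fun ω => (hCh _).trans (le_max_left _ _)
  have hCH0 : (0:ℝ) ≤ max Ch₀ 0 := le_max_right _ _
  have hR1 : ∀ ω, |R ω| ≤ 1 := by
    intro ω; rcases hR01 ω with h' | h' <;> simp [h']
  -- Part 1
  have part1 : ∀ f : (Fin d → ℝ) → ℝ, Measurable f → (∃ C, ∀ w, |f w| ≤ C) →
      ∫ ω, R ω * (h (tilde Z X ω) - mh (matT Γ (tilde Z X ω)) / m1 (matT Γ (tilde Z X ω)))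
        * f (matT Γ (tilde Z X ω)) * (X ω ⬝ᵥ v) ∂P = 0 := by
    intro f hfm hfbd
    obtain ⟨Cf₀, hCf⟩ := hfbd
    have hcore := aux_core (P[|{ω | R ω = 1}]) (fun ω => matT Γ (tilde Z X ω)) hW
      (fun ω => X ω ⬝ᵥ v) (fun ω => h (tilde Z X ω)) hxv (hhm.comp htilde)
      hCY hCH mh m1 hmhm hm1m hmhver hm1ver hm1ne f hfm
      (Cf := max Cf₀ 0) (fun w => (hCf w).trans (le_max_left _ _))
    have htr := cond_transfer P R hR hR01 hρ
      (fun ω => (h (tilde Z X ω) - mh (matT Γ (tilde Z X ω)) / m1 (matT Γ (tilde Z X ω)))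
        * f (matT Γ (tilde Z X ω)) * (X ω ⬝ᵥ v))
    have hrw : ∫ ω, R ω * (h (tilde Z X ω) - mh (matT Γ (tilde Z X ω)) /
          m1 (matT Γ (tilde Z X ω))) * f (matT Γ (tilde Z X ω)) * (X ω ⬝ᵥ v) ∂P
        = ∫ ω, R ω * ((h (tilde Z X ω) - mh (matT Γ (tilde Z X ω)) /
          m1 (matT Γ (tilde Z X ω))) * f (matT Γ (tilde Z X ω)) * (X ω ⬝ᵥ v)) ∂P :=
      integral_congr_ae (Filter.Eventually.of_forall fun ω => by ring)
    rw [hrw, htr, hcore, mul_zero]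
  refine ⟨part1, ?_⟩
  -- Part 2
  intro u hu husolve f hfm hfbd
  obtain ⟨Cf₀, hCf₀⟩ := hfbd
  have hCf : ∀ w, |f w| ≤ max Cf₀ 0 := fun w => (hCf₀ w).trans (le_max_left _ _)
  have hCf0 : (0:ℝ) ≤ max Cf₀ 0 := le_max_right _ _
  show ∫ ω, (R ω * (u (tilde Z X ω) + (h (tilde Z X ω) - mh (matT Γ (tilde Z X ω)) /
      m1 (matT Γ (tilde Z X ω)))) - 1) * f (matT Γ (tilde Z X ω)) * (X ω ⬝ᵥ v) ∂P = 0
  by_cases hS : Integrable (fun ω => (R ω * (u (tilde Z X ω) + (h (tilde Z X ω) -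
      mh (matT Γ (tilde Z X ω)) / m1 (matT Γ (tilde Z X ω)))) - 1) *
      f (matT Γ (tilde Z X ω)) * (X ω ⬝ᵥ v)) P
  swap
  · exact integral_undef hS
  set g : (Fin d → ℝ) → ℝ := fun w => mh w / m1 w with hg_def
  -- the integral of every truncated version is zero
  have key : ∀ n : ℕ, ∫ ω, (R ω * (u (tilde Z X ω) + (h (tilde Z X ω) -
      mh (matT Γ (tilde Z X ω)) / m1 (matT Γ (tilde Z X ω)))) - 1) *
      truncF g f n (matT Γ (tilde Z X ω)) * (X ω ⬝ᵥ v) ∂P = 0 := by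
    intro n
    have hfn : Measurable (truncF g f n) := truncF_meas (hmhm.div hm1m) hfm n
    have hfnbd : ∀ w, |truncF g f n w| ≤ max Cf₀ 0 := truncF_bd hCf hCf0 n
    have hB_int : Integrable (fun ω => R ω * (h (tilde Z X ω) - mh (matT Γ (tilde Z X ω)) /
        m1 (matT Γ (tilde Z X ω))) * truncF g f n (matT Γ (tilde Z X ω)) * (X ω ⬝ᵥ v)) P := by
      refine bdd_integrable P (((hR.mul ((hhm.comp htilde).sub ((hmhm.comp hW).div
        (hm1m.comp hW)))).mul (hfn.comp hW)).mul hxv)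
        (C := 1 * (max Ch₀ 0 + n) * max Cf₀ 0 * (max Cx₀ 0 * ∑ i, |v i|)) ?_
      intro ω
      by_cases hc : |g (matT Γ (tilde Z X ω))| ≤ (n : ℝ)
      · refine abs_mul_le' (abs_mul_le' (abs_mul_le' (hR1 ω) ?_) (hfnbd _)) (hCY ω)
        refine (abs_sub _ _).trans (add_le_add (hCH ω) ?_)
        simpa [hg_def] using hc
      · have h0 : truncF g f n (matT Γ (tilde Z X ω)) = 0 := if_neg hc
        rw [h0]
        simp only [mul_zero, zero_mul, abs_zero]
        positivity
    have hA0 := husolve (truncF g f n) hfn ⟨max Cf₀ 0, hfnbd⟩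
    have hB0 := part1 (truncF g f n) hfn ⟨max Cf₀ 0, hfnbd⟩
    by_cases hA : Integrable (fun ω => (R ω * u (tilde Z X ω) - 1) *
        truncF g f n (matT Γ (tilde Z X ω)) * (X ω ⬝ᵥ v)) P
    · have hsplit : (fun ω => (R ω * (u (tilde Z X ω) + (h (tilde Z X ω) -
          mh (matT Γ (tilde Z X ω)) / m1 (matT Γ (tilde Z X ω)))) - 1) *
          truncF g f n (matT Γ (tilde Z X ω)) * (X ω ⬝ᵥ v))
          = fun ω => (R ω * u (tilde Z X ω) - 1) * truncF g f n (matT Γ (tilde Z X ω)) *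
            (X ω ⬝ᵥ v) + R ω * (h (tilde Z X ω) - mh (matT Γ (tilde Z X ω)) /
            m1 (matT Γ (tilde Z X ω))) * truncF g f n (matT Γ (tilde Z X ω)) * (X ω ⬝ᵥ v) := by
        funext ω; ring
      rw [hsplit, integral_add hA hB_int, hA0, hB0, add_zero]
    · apply integral_undef
      intro hcon
      apply hA
      refine (hcon.sub hB_int).congr (Filter.Eventually.of_forall fun ω => ?_)
      simp only [Pi.sub_apply]
      ring
  -- dominated convergence
  have hSn_meas : ∀ n : ℕ, AEStronglyMeasurable (fun ω => (R ω * (u (tilde Z X ω) +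
      (h (tilde Z X ω) - mh (matT Γ (tilde Z X ω)) / m1 (matT Γ (tilde Z X ω)))) - 1) *
      truncF g f n (matT Γ (tilde Z X ω)) * (X ω ⬝ᵥ v)) P := fun n =>
    ((((hR.mul ((hu.comp htilde).add ((hhm.comp htilde).sub ((hmhm.comp hW).div
      (hm1m.comp hW))))).sub measurable_const).mul
      ((truncF_meas (hmhm.div hm1m) hfm n).comp hW)).mul hxv).aestronglyMeasurable
  have hbound : ∀ n : ℕ, ∀ᵐ ω ∂P, ‖(R ω * (u (tilde Z X ω) + (h (tilde Z X ω) -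
      mh (matT Γ (tilde Z X ω)) / m1 (matT Γ (tilde Z X ω)))) - 1) *
      truncF g f n (matT Γ (tilde Z X ω)) * (X ω ⬝ᵥ v)‖
      ≤ |(R ω * (u (tilde Z X ω) + (h (tilde Z X ω) -
      mh (matT Γ (tilde Z X ω)) / m1 (matT Γ (tilde Z X ω)))) - 1) *
      f (matT Γ (tilde Z X ω)) * (X ω ⬝ᵥ v)| := by
    intro n
    refine Filter.Eventually.of_forall fun ω => ?_
    rw [Real.norm_eq_abs]
    by_cases hc : |g (matT Γ (tilde Z X ω))| ≤ (n : ℝ)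
    · rw [show truncF g f n (matT Γ (tilde Z X ω)) = f (matT Γ (tilde Z X ω)) from if_pos hc]
    · rw [show truncF g f n (matT Γ (tilde Z X ω)) = 0 from if_neg hc]
      simp only [mul_zero, zero_mul, abs_zero]
      exact abs_nonneg _
  have hptlim : ∀ᵐ ω ∂P, Filter.Tendsto (fun n : ℕ => (R ω * (u (tilde Z X ω) +
      (h (tilde Z X ω) - mh (matT Γ (tilde Z X ω)) / m1 (matT Γ (tilde Z X ω)))) - 1) *
      truncF g f n (matT Γ (tilde Z X ω)) * (X ω ⬝ᵥ v)) Filter.atTop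
      (nhds ((R ω * (u (tilde Z X ω) + (h (tilde Z X ω) -
      mh (matT Γ (tilde Z X ω)) / m1 (matT Γ (tilde Z X ω)))) - 1) *
      f (matT Γ (tilde Z X ω)) * (X ω ⬝ᵥ v))) := by
    refine Filter.Eventually.of_forall fun ω => ?_
    refine Filter.Tendsto.congr' ?_ tendsto_const_nhds
    rw [Filter.EventuallyEq, Filter.eventually_atTop]
    refine ⟨⌈|g (matT Γ (tilde Z X ω))|⌉₊, fun n hn => ?_⟩
    have hc : |g (matT Γ (tilde Z X ω))| ≤ (n : ℝ) :=
      (Nat.le_ceil _).trans (by exact_mod_cast hn)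
    rw [show truncF g f n (matT Γ (tilde Z X ω)) = f (matT Γ (tilde Z X ω)) from if_pos hc]
  have hdom := tendsto_integral_of_dominated_convergence _ hSn_meas hS.abs hbound hptlim
  have h0 : Filter.Tendsto (fun _ : ℕ => (0 : ℝ)) Filter.atTop
      (nhds (∫ ω, (R ω * (u (tilde Z X ω) + (h (tilde Z X ω) -
      mh (matT Γ (tilde Z X ω)) / m1 (matT Γ (tilde Z X ω)))) - 1) *
      f (matT Γ (tilde Z X ω)) * (X ω ⬝ᵥ v) ∂P)) := by
    simpa only [key] using hdom
  exact tendsto_nhds_unique h0 tendsto_const_nhds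
end
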